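/- Let R, S be inconsistent edges of a directed graph G (with consistent/inconsistent edges) such that R and S are coupled and S ⋦ R (i.e., u_R is not reachable from u_S by any directed path in G). Then G admits an (R,S)-valid labeling L : V(G) → L into the six-element lattice L = {⊥, B, X, Φ, X*, ⊤}, that is: L(u_R) = Φ and L(v_R) ∈ {⊤, X, X*}; L(u_S) = X and L(v_S) ∈ {B, X*}; for every inconsistent edge T ∉ {R, S}, L(u_T) ≥ L(v_T); there is an undirected path P_R : v_R ↔ u_S with L(v) ≥ X for all v ∈ P_R; and there is an undirected path P_S : v_S ↔ u_R with L(v) ≥ B for all v ∈ P_S. -/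

import Mathlib

namespace CQA

variable {V : Type*}

/-- Directed reachability along edges in `A`. -/
def reach (A : Set (V × V)) (u v : V) : Prop :=
  Relation.ReflTransGen (fun x y => (x, y) ∈ A) u v

/-- `u` and `v` are in the same strongly connected component of the graph with edges `E`. -/
def sameSCC (E : Set (V × V)) (u v : V) : Prop := reach E u v ∧ reach E v u

/-- There is an undirected path in `E` from `a` to `b` all of whose vertices
(including the endpoints) avoid the set `A`. -/
def ureach (E : Set (V × V)) (A : Set V) (a b : V) : Prop :=
  a ∉ A ∧ Relation.ReflTransGen (fun x y => ((x, y) ∈ E ∨ (y, x) ∈ E) ∧ y ∉ A) a b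

/-- `u_R^{+,R}`: vertices reachable from the source of `R` in `G − {R}`. -/
def uplus (E : Set (V × V)) (R : V × V) : Set V := {v | reach (E \ {R}) R.1 v}

/-- `u^⊕`: vertices reachable from `u` using only consistent edges `Ec`. -/
def uoplus (Ec : Set (V × V)) (u : V) : Set V := {v | reach Ec u v}

/-- `C` is a source-equivalence class of inconsistent edges `Ei`. -/
def IsClass (E Ei : Set (V × V)) (C : Set (V × V)) : Prop :=
  ∃ R ∈ Ei, C = {S ∈ Ei | sameSCC E R.1 S.1}

/-- `C^⊕ = ⋂_{R ∈ C} u_R^⊕`. -/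
def Coplus (Ec : Set (V × V)) (C : Set (V × V)) : Set V :=
  {v | ∀ R ∈ C, v ∈ uoplus Ec R.1}

/-- `C⁺ = ⋂_{R ∈ C} u_R^{+,R}`. -/
def Cplus (E : Set (V × V)) (C : Set (V × V)) : Set V :=
  {v | ∀ R ∈ C, v ∈ uplus E R}

/-- `C₁ ≤⊕ C₂` iff some `S ∈ C₂` has `u_S ∈ C₁^⊕`. -/
def leOplus (Ec : Set (V × V)) (C₁ C₂ : Set (V × V)) : Prop :=
  ∃ S ∈ C₂, S.1 ∈ Coplus Ec C₁

/-- The strict order `C₁ <⊕ C₂`. -/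
def ltOplus (Ec : Set (V × V)) (C₁ C₂ : Set (V × V)) : Prop :=
  leOplus Ec C₁ C₂ ∧ C₁ ≠ C₂

/-- A sink: a maximal element of `<⊕` among source-equivalence classes. -/
def IsSink (E Ei Ec : Set (V × V)) (C : Set (V × V)) : Prop :=
  IsClass E Ei C ∧ ∀ C', IsClass E Ei C' → ¬ ltOplus Ec C C'

/-- `C' ∈ coupled⊕(C)`. -/
def coupledOplusCl (E Ec : Set (V × V)) (C C' : Set (V × V)) : Prop :=
  C' = C ∨ ∃ R ∈ C, ∃ S ∈ C', ureach E (Coplus Ec C) R.2 S.1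

/-- `C' ∈ coupled⁺(C)`. -/
def coupledPlusCl (E : Set (V × V)) (C C' : Set (V × V)) : Prop :=
  C' = C ∨ ∃ R ∈ C, ∃ S ∈ C', ureach E (Cplus E C) R.2 S.1

/-- `S ∈ coupled⁺(R)` for inconsistent edges `R, S`:
either `S ∈ [R]`, or there is an undirected path `v_R ↔ u_S` avoiding `u_R^{+,R}`. -/
def coupledPlusEdge (E Ei : Set (V × V)) (R S : V × V) : Prop :=
  S ∈ Ei ∧ (sameSCC E R.1 S.1 ∨ ureach E (uplus E R) R.2 S.1)

/-- `G` is splittable: every coupled pair of inconsistent edges is source-equivalent. -/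
def Splittable (E Ec : Set (V × V)) : Prop :=
  ∀ R ∈ E \ Ec, ∀ S ∈ E \ Ec,
    coupledPlusEdge E (E \ Ec) R S → coupledPlusEdge E (E \ Ec) S R → sameSCC E R.1 S.1

/-- `G` is f-closed: for every inconsistent edge `R`,
`v_R^⊕ ∩ u_R^{+,R} ⊆ u_R^⊕`. -/
def FClosed (E Ec : Set (V × V)) : Prop :=
  ∀ R ∈ E \ Ec, ∀ v, v ∈ uoplus Ec R.2 → v ∈ uplus E R → v ∈ uoplus Ec R.1

end CQA

/-- The six labels ⊥, B, X, Φ, X*, ⊤. -/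
inductive Lab : Type
  | bot | B | X | Phi | Xs | top
deriving DecidableEq

/-- The order on the six labels: ⊥ is minimum, ⊤ is maximum,
B ≤ Φ, X ≤ X*, B ≤ X*, and nothing else besides reflexivity. -/
def Lab.le : Lab → Lab → Prop := fun a b =>
  a = b ∨ a = Lab.bot ∨ b = Lab.top ∨
  (a = Lab.B ∧ b = Lab.Phi) ∨ (a = Lab.X ∧ b = Lab.Xs) ∨ (a = Lab.B ∧ b = Lab.Xs)

/-- The endpoint of a `ureach` path also avoids the forbidden set. -/
lemma ureach_notMem_right {V : Type*} {E : Set (V × V)} {A : Set V} {a b : V}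
    (h : CQA.ureach E A a b) : b ∉ A := by
  obtain ⟨ha, hp⟩ := h
  induction hp with
  | refl => exact ha
  | tail _ h2 _ => exact h2.2

open CQA in
/-- if inconsistent edges R, S are coupled and S ⋦ R, then G
admits an (R,S)-valid labeling into the six-element lattice. -/
theorem stmt_16 {V : Type*} [Fintype V] (E Ec : Set (V × V)) (hEc : Ec ⊆ E)
    (R S : V × V) (hR : R ∈ E \ Ec) (hS : S ∈ E \ Ec)
    (hcoupRS : ureach E (uplus E R) R.2 S.1)
    (hcoupSR : ureach E (uplus E S) S.2 R.1)
    (hnles : ¬ reach E S.1 R.1) :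
    ∃ L : V → Lab,
      L R.1 = Lab.Phi ∧ (L R.2 = Lab.top ∨ L R.2 = Lab.X ∨ L R.2 = Lab.Xs) ∧
      L S.1 = Lab.X ∧ (L S.2 = Lab.B ∨ L S.2 = Lab.Xs) ∧
      (∀ T ∈ E \ Ec, T ≠ R → T ≠ S → Lab.le (L T.2) (L T.1)) ∧
      ureach E {v | ¬ Lab.le Lab.X (L v)} R.2 S.1 ∧
      ureach E {v | ¬ Lab.le Lab.B (L v)} S.2 R.1 := by
  classical
  -- P = u_R^{+,R}, Q = u_S^{+,S}, W = vertices that can reach u_R in E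
  set W : Set V := {v | reach E v R.1} with hWdef
  -- basic membership facts
  have huRP : R.1 ∈ uplus E R := Relation.ReflTransGen.refl
  have huSQ : S.1 ∈ uplus E S := Relation.ReflTransGen.refl
  have huRW : R.1 ∈ W := Relation.ReflTransGen.refl
  have hmonoQ : ∀ {v : V}, v ∈ uplus E S → reach E S.1 v := by
    intro v hv
    exact Relation.ReflTransGen.mono (r := fun x y => (x, y) ∈ E \ {S}) (p := fun x y => (x, y) ∈ E) (fun x y hxy => hxy.1) _ _ hv
  have hWQ : ∀ {v : V}, v ∈ W → v ∉ uplus E S := by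
    intro v hvW hvQ
    exact hnles ((hmonoQ hvQ).trans hvW)
  have huRQ : R.1 ∉ uplus E S := hWQ huRW
  have huSP : S.1 ∉ uplus E R := ureach_notMem_right hcoupRS
  have hvRnP : R.2 ∉ uplus E R := hcoupRS.1
  have hvSnQ : S.2 ∉ uplus E S := hcoupSR.1
  have hvSnW : S.2 ∉ W := by
    intro h
    exact hnles (Relation.ReflTransGen.head hS.1 h)
  have huSW : S.1 ∉ W := fun h => hnles h
  refine ⟨fun v =>
      if v ∈ uplus E S then (if v ∈ uplus E R then Lab.bot else Lab.X)
      else if v ∈ W then (if v ∈ uplus E R then Lab.Phi else Lab.top)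
      else if v ∈ uplus E R then Lab.B else Lab.Xs,
    ?_, ?_, ?_, ?_, ?_, ?_, ?_⟩
  · simp [huRQ, huRW, huRP]
  · by_cases h1 : R.2 ∈ uplus E S
    · right; left; simp [h1, hvRnP]
    · by_cases h2 : R.2 ∈ W
      · left; simp [h1, h2, hvRnP]
      · right; right; simp [h1, h2, hvRnP]
  · simp [huSQ, huSP]
  · by_cases h3 : S.2 ∈ uplus E R
    · left; simp [hvSnQ, hvSnW, h3]
    · right; simp [hvSnQ, hvSnW, h3]
  · intro T hT hTR hTS
    have hE' : (T.1, T.2) ∈ E := hT.1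
    have hPc : T.1 ∈ uplus E R → T.2 ∈ uplus E R := by
      intro h
      refine h.tail ⟨hE', ?_⟩
      simpa using hTR
    have hQc : T.1 ∈ uplus E S → T.2 ∈ uplus E S := by
      intro h
      refine h.tail ⟨hE', ?_⟩
      simpa using hTS
    have hWc : T.2 ∈ W → T.1 ∈ W := fun h => Relation.ReflTransGen.head hE' h
    by_cases h1 : T.1 ∈ uplus E S <;> by_cases h2 : T.1 ∈ W <;>
      by_cases h3 : T.1 ∈ uplus E R <;> by_cases h4 : T.2 ∈ uplus E S <;>
      by_cases h5 : T.2 ∈ W <;> by_cases h6 : T.2 ∈ uplus E R <;>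
      simp only [h1, h2, h3, h4, h5, h6, if_true, if_false, ite_true, ite_false] <;>
      first
        | exact absurd (hPc h3) h6
        | exact absurd (hQc h1) h4
        | exact absurd (hWc h5) h2
        | exact absurd h1 (hWQ h2)
        | exact absurd h4 (hWQ h5)
        | simp [Lab.le]
  · have hset : {v | ¬ Lab.le Lab.X
        ((fun v => if v ∈ uplus E S then (if v ∈ uplus E R then Lab.bot else Lab.X)
          else if v ∈ W then (if v ∈ uplus E R then Lab.Phi else Lab.top)
          else if v ∈ uplus E R then Lab.B else Lab.Xs) v)} = uplus E R := by
      ext v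
      by_cases h1 : v ∈ uplus E S <;> by_cases h2 : v ∈ W <;>
        by_cases h3 : v ∈ uplus E R <;> simp [h1, h2, h3] <;> simp [Lab.le]
    rw [hset]
    exact hcoupRS
  · have hset : {v | ¬ Lab.le Lab.B
        ((fun v => if v ∈ uplus E S then (if v ∈ uplus E R then Lab.bot else Lab.X)
          else if v ∈ W then (if v ∈ uplus E R then Lab.Phi else Lab.top)
          else if v ∈ uplus E R then Lab.B else Lab.Xs) v)} = uplus E S := by
      ext v
      by_cases h1 : v ∈ uplus E S <;> by_cases h2 : v ∈ W <;>
        by_cases h3 : v ∈ uplus E R <;> simp [h1, h2, h3] <;> simp [Lab.le]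
    rw [hset]
    exact hcoupSR
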